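/- For the sequence Γ^m_{22} of rational functions in u^2, u^3, ..., defined by Γ^2_{22} = −ε/u^2 and Γ^{m+1}_{22} = −(1/u^2) Σ_{s=1}^{m-1} u^{2+s} Γ^{m+1-s}_{22}, the shift-derivative identity ∂Γ^h_{22}/∂u^l = ∂Γ^{h-1}_{22}/∂u^{l-1} holds for all h ≥ 3 and l ≥ 3. -/

import Mathlib

/-- Partial derivative of `f` with respect to the variable `u^l` at the point `x`. -/
noncomputable def pd (l : ℕ) (f : (ℕ → ℝ) → ℝ) (x : ℕ → ℝ) : ℝ :=
  deriv (fun t => f (Function.update x l t)) (x l)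

set_option linter.unusedSectionVars false

section Aux

variable (ε : ℝ) (G : ℕ → (ℕ → ℝ) → ℝ)
    (h1 : ∀ x, G 1 x = 0)
    (h2 : ∀ x, G 2 x = -ε / x 2)
    (hrec : ∀ m : ℕ, 2 ≤ m → ∀ x,
      G (m + 1) x = -(1 / x 2) * ∑ s ∈ Finset.Icc 1 (m - 1), x (2 + s) * G (m + 1 - s) x)

include h1 h2 hrec

lemma diffG : ∀ m, 1 ≤ m → ∀ l (x : ℕ → ℝ), x 2 ≠ 0 →
    DifferentiableAt ℝ (fun t => G m (Function.update x l t)) (x l) := by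
  intro m
  induction m using Nat.strong_induction_on with
  | _ m ih =>
    intro hm l x hx
    rcases m with _ | _ | _ | k
    · omega
    · simp only [h1]
      exact differentiableAt_const 0
    · simp only [h2]
      by_cases hl : l = 2
      · subst hl
        simp only [Function.update_self]
        exact (differentiableAt_const (-ε)).div differentiableAt_id hx
      · simp only [Function.update_of_ne (fun h => hl h.symm)]
        exact differentiableAt_const _
    · have hre : ∀ t : ℝ, G (k + 3) (Function.update x l t)
          = -(1 / Function.update x l t 2) *
            ∑ s ∈ Finset.Icc 1 (k + 1),
              Function.update x l t (2 + s) * G (k + 3 - s) (Function.update x l t) := by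
        intro t
        exact hrec (k + 2) (by omega) (Function.update x l t)
      simp only [hre]
      apply DifferentiableAt.mul
      · by_cases hl : l = 2
        · subst hl
          simp only [Function.update_self]
          exact ((differentiableAt_const (1:ℝ)).div differentiableAt_id hx).neg
        · simp only [Function.update_of_ne (fun h => hl h.symm)]
          exact differentiableAt_const _
      · apply DifferentiableAt.fun_sum
        intro s hs
        rw [Finset.mem_Icc] at hs
        apply DifferentiableAt.mul
        · have : (fun t : ℝ => Function.update x l t (2 + s))
              = fun t => if 2 + s = l then t else x (2 + s) := by
            funext t; rw [Function.update_apply]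
          rw [this]
          split_ifs
          · exact differentiableAt_id
          · exact differentiableAt_const _
        · exact ih (k + 3 - s) (by omega) (by omega) l x hx

lemma pdG1 (l : ℕ) (x : ℕ → ℝ) : pd l (G 1) x = 0 := by
  simp only [pd, h1, deriv_const]

lemma pdG2 (l : ℕ) (hl : l ≠ 2) (x : ℕ → ℝ) : pd l (G 2) x = 0 := by
  simp only [pd, h2, Function.update_of_ne (fun h => hl h.symm), deriv_const]

lemma pdG2two (x : ℕ → ℝ) (hx : x 2 ≠ 0) : pd 2 (G 2) x = ε / (x 2) ^ 2 := by
  simp only [pd, h2, Function.update_self]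
  have h := (hasDerivAt_const (x 2) (-ε)).div (hasDerivAt_id (x 2)) hx
  have hd := h.deriv
  simp only [id_eq] at hd
  rw [show (fun t : ℝ => -ε / t) = (fun _ => -ε) / id from rfl, hd]
  field_simp
  ring

lemma pdf (n : ℕ) (hn : 2 ≤ n) (l : ℕ) (hl : 2 ≤ l) (x : ℕ → ℝ) (hx : x 2 ≠ 0) :
    pd l (G (n + 1)) x = -(1 / x 2) *
      ((if l = 2 then G (n + 1) x else if l ≤ n + 1 then G (n + 3 - l) x else 0)
        + ∑ s ∈ Finset.Icc 1 (n - 1), x (2 + s) * pd l (G (n + 1 - s)) x) := by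
  have hterm : ∀ s ∈ Finset.Icc 1 (n - 1),
      HasDerivAt (fun t => Function.update x l t (2 + s) * G (n + 1 - s) (Function.update x l t))
        ((if 2 + s = l then 1 else 0) * G (n + 1 - s) x + x (2 + s) * pd l (G (n + 1 - s)) x)
        (x l) := by
    intro s hs
    rw [Finset.mem_Icc] at hs
    have hf : HasDerivAt (fun t : ℝ => Function.update x l t (2 + s))
        (if 2 + s = l then 1 else 0) (x l) := by
      have : (fun t : ℝ => Function.update x l t (2 + s))
          = fun t => if 2 + s = l then t else x (2 + s) := by
        funext t; rw [Function.update_apply]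
      rw [this]
      split_ifs
      · exact hasDerivAt_id _
      · exact hasDerivAt_const _ _
    have hg := (diffG ε G h1 h2 hrec (n + 1 - s) (by omega) l x hx).hasDerivAt
    have hmul := hf.mul hg
    simp only [Function.update_eq_self] at hmul
    exact hmul
  have hpref : HasDerivAt (fun t : ℝ => -(1 / Function.update x l t 2))
      (if l = 2 then 1 / (x 2) ^ 2 else 0) (x l) := by
    by_cases hl2 : l = 2
    · subst hl2
      simp only [Function.update_self, if_pos, ↓reduceIte]
      have h := (((hasDerivAt_const (x 2) (1:ℝ)).div (hasDerivAt_id (x 2)) hx)).neg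
      simp only [id_eq] at h
      exact h.congr_deriv (by ring)
    · simp only [Function.update_of_ne (fun h => hl2 h.symm), if_neg hl2]
      exact hasDerivAt_const _ _
  have hsum := HasDerivAt.fun_sum hterm
  have hmul := hpref.mul hsum
  simp only [Function.update_eq_self] at hmul
  have hfun : (fun t => G (n + 1) (Function.update x l t))
      = fun t => -(1 / Function.update x l t 2) *
          ∑ s ∈ Finset.Icc 1 (n - 1),
            Function.update x l t (2 + s) * G (n + 1 - s) (Function.update x l t) := by
    funext t; exact hrec n hn (Function.update x l t)
  have e1 : pd l (G (n + 1)) x =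
      (if l = 2 then 1 / (x 2) ^ 2 else 0) *
        (∑ s ∈ Finset.Icc 1 (n - 1), x (2 + s) * G (n + 1 - s) x)
      + -(1 / x 2) *
        ∑ s ∈ Finset.Icc 1 (n - 1),
          ((if 2 + s = l then 1 else 0) * G (n + 1 - s) x + x (2 + s) * pd l (G (n + 1 - s)) x) := by
    unfold pd
    rw [hfun]
    exact hmul.deriv
  rw [e1, Finset.sum_add_distrib]
  by_cases hl2 : l = 2
  · subst hl2
    simp only [if_pos rfl, ↓reduceIte]
    have hz : (∑ s ∈ Finset.Icc 1 (n - 1), (if 2 + s = 2 then (1:ℝ) else 0) * G (n + 1 - s) x) = 0 := by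
      apply Finset.sum_eq_zero
      intro s hs
      rw [Finset.mem_Icc] at hs
      rw [if_neg (by omega), zero_mul]
    rw [hz]
    have hG : G (n + 1) x = -(1 / x 2) * ∑ s ∈ Finset.Icc 1 (n - 1), x (2 + s) * G (n + 1 - s) x :=
      hrec n hn x
    rw [hG]
    field_simp
    ring
  · simp only [if_neg hl2]
    have hind : (∑ s ∈ Finset.Icc 1 (n - 1), (if 2 + s = l then (1:ℝ) else 0) * G (n + 1 - s) x)
        = if l ≤ n + 1 then G (n + 3 - l) x else 0 := by
      have hc : ∀ s ∈ Finset.Icc 1 (n - 1),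
          (if 2 + s = l then (1:ℝ) else 0) * G (n + 1 - s) x
            = if s = l - 2 then G (n + 3 - l) x else 0 := by
        intro s hs
        rw [Finset.mem_Icc] at hs
        by_cases hsl : s = l - 2
        · rw [if_pos (by omega), if_pos hsl, show n + 1 - s = n + 3 - l from by omega, one_mul]
        · rw [if_neg (by omega), if_neg hsl, zero_mul]
      rw [Finset.sum_congr rfl hc,
        Finset.sum_ite_eq' (Finset.Icc 1 (n - 1)) (l - 2) (fun _ => G (n + 3 - l) x)]
      have hmem : (l - 2 ∈ Finset.Icc 1 (n - 1)) ↔ l ≤ n + 1 := by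
        rw [Finset.mem_Icc]; omega
      by_cases hln : l ≤ n + 1
      · rw [if_pos (hmem.mpr hln), if_pos hln]
      · rw [if_neg (fun h => hln (hmem.mp h)), if_neg hln]
    rw [hind]
    ring

end Aux

/-- **Lemma 7.1, single Jordan block.** For the recursively defined
rational functions `Γ^m_{22}` (here `G m`), the shift-derivative identity
`∂Γ^h_{22}/∂u^l = ∂Γ^{h-1}_{22}/∂u^{l-1}` holds for all `h ≥ 3`, `l ≥ 3`. -/
theorem statement8 (ε : ℝ) (G : ℕ → (ℕ → ℝ) → ℝ)
    (h1 : ∀ x, G 1 x = 0)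
    (h2 : ∀ x, G 2 x = -ε / x 2)
    (hrec : ∀ m : ℕ, 2 ≤ m → ∀ x,
      G (m + 1) x = -(1 / x 2) * ∑ s ∈ Finset.Icc 1 (m - 1), x (2 + s) * G (m + 1 - s) x) :
    ∀ h l : ℕ, 3 ≤ h → 3 ≤ l → ∀ x : ℕ → ℝ, x 2 ≠ 0 →
      pd l (G h) x = pd (l - 1) (G (h - 1)) x := by
  intro h
  induction h using Nat.strong_induction_on with
  | _ h ih =>
    intro l hh hl x hx
    obtain ⟨n, hn2, rfl⟩ : ∃ n, 2 ≤ n ∧ h = n + 1 := ⟨h - 1, by omega, by omega⟩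
    rw [Nat.add_sub_cancel]
    rw [pdf ε G h1 h2 hrec n hn2 l (by omega) x hx, if_neg (by omega : ¬ l = 2)]
    have hsum_eq : ∀ s ∈ Finset.Icc 1 (n - 1),
        x (2 + s) * pd l (G (n + 1 - s)) x = x (2 + s) * pd (l - 1) (G (n - s)) x := by
      intro s hs
      rw [Finset.mem_Icc] at hs
      by_cases hsn : s ≤ n - 2
      · have := ih (n + 1 - s) (by omega) l (by omega) hl x hx
        rw [this, show n + 1 - s - 1 = n - s from by omega]
      · rw [show n + 1 - s = 2 from by omega, show n - s = 1 from by omega,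
          pdG2 ε G h1 h2 hrec l (by omega) x, pdG1 ε G h1 h2 hrec (l - 1) x]
    rw [Finset.sum_congr rfl hsum_eq]
    rcases Nat.lt_or_ge n 3 with hn3 | hn3
    · have hn : n = 2 := by omega
      subst hn
      rw [show (2:ℕ) - 1 = 1 from rfl, show Finset.Icc 1 1 = {1} from rfl, Finset.sum_singleton,
        show (2:ℕ) - 1 = 1 from rfl, pdG1 ε G h1 h2 hrec (l - 1) x, mul_zero, add_zero]
      by_cases hl3 : l = 3
      · subst hl3
        rw [if_pos (by omega), show 2 + 3 - 3 = 2 from rfl,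
          pdG2two ε G h1 h2 hrec x hx, h2]
        field_simp
      · rw [if_neg (by omega), pdG2 ε G h1 h2 hrec (l - 1) (by omega) x, mul_zero]
    · have hr := pdf ε G h1 h2 hrec (n - 1) (by omega) (l - 1) (by omega) x hx
      rw [show n - 1 + 1 = n from by omega, show n - 1 + 3 = n + 2 from by omega,
        show n + 2 - (l - 1) = n + 3 - l from by omega,
        show n - 1 - 1 = n - 2 from by omega] at hr
      rw [hr, show n - 1 = n - 2 + 1 from by omega,
        Finset.sum_Icc_succ_top (by omega : 1 ≤ n - 2 + 1),
        show n - (n - 2 + 1) = 1 from by omega, pdG1 ε G h1 h2 hrec (l - 1) x, mul_zero, add_zero]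
      by_cases hl3 : l = 3
      · subst hl3
        rw [if_pos (by omega), if_pos (by omega : 3 - 1 = 2), show n + 3 - 3 = n from by omega]
      · rw [if_neg (by omega : ¬ l - 1 = 2)]
        by_cases hln : l ≤ n + 1
        · rw [if_pos hln, if_pos (by omega : l - 1 ≤ n)]
        · rw [if_neg hln, if_neg (by omega : ¬ l - 1 ≤ n)]
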